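/- Let λ₁, λ₂, λ₃ be pairwise distinct real numbers. For h > 0 write eᵢ(h) = e^{λᵢh} and define T₁(h) = λ₁(e₂ − e₃) + λ₂(e₃ − e₁) + λ₃(e₁ − e₂), T₂(h) = λ₁(1 − e₁)(e₂ − e₃) + λ₂(1 − e₂)(e₃ − e₁) + λ₃(1 − e₃)(e₁ − e₂), θ(h) = T₁(h)/T₂(h), C₁(h) = λ₂ − λ₁ + λ₁e₁ − λ₂e₂, φ(h) = (e₁ − e₂)/(λ₁ − λ₂ + θ(h)C₁(h)), and ψ(h) = e₃ − φ(h)λ₃(e₃θ(h) + 1 − θ(h)). Then, as h tends to 0 from the right: ψ(h) tends to 1, φ(h)/h tends to 1, and θ(h) tends to 1/2. -/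

import Mathlib

open Real Filter

private lemma lim1aux (a : ℝ) :
    Tendsto (fun x : ℝ => (exp (a*x) - 1)/x) (nhdsWithin 0 (Set.Ioi 0)) (nhds a) := by
  have h : HasDerivAt (fun x : ℝ => exp (a*x)) a 0 := by
    have := ((Real.hasDerivAt_exp (a*0)).comp 0 ((hasDerivAt_id (0:ℝ)).const_mul a))
    simp at this
    exact this
  rw [hasDerivAt_iff_tendsto_slope] at h
  have h2 := h.mono_left (nhdsWithin_mono 0 (fun x hx => ne_of_gt hx))
  refine h2.congr fun x => ?_
  simp [slope_def_field, mul_zero, Real.exp_zero]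

private lemma lim2aux (a : ℝ) :
    Tendsto (fun x : ℝ => (exp (a*x) - 1 - a*x)/x^2) (nhdsWithin 0 (Set.Ioi 0))
      (nhds (a^2/2)) := by
  apply HasDerivAt.lhopital_zero_nhdsGT (f' := fun x => exp (a*x) * a - a)
    (g' := fun x => 2*x)
  · filter_upwards with x
    have h1 : HasDerivAt (fun x : ℝ => exp (a*x)) (exp (a*x) * a) x := by
      have := ((Real.hasDerivAt_exp (a*x)).comp x ((hasDerivAt_id x).const_mul a))
      simp at this
      exact this
    have := (h1.sub_const 1).sub ((hasDerivAt_id x).const_mul a)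
    simp at this
    exact this
  · filter_upwards with x
    simpa using (hasDerivAt_pow 2 x)
  · filter_upwards [self_mem_nhdsWithin] with x hx
    have : (0:ℝ) < x := hx
    positivity
  · have hc : Continuous (fun x : ℝ => exp (a*x) - 1 - a*x) := by continuity
    have h0 := (hc.tendsto 0).mono_left (nhdsWithin_le_nhds (s := Set.Ioi (0:ℝ)))
    simpa using h0
  · have hc : Continuous (fun x : ℝ => x^2) := by continuity
    have h0 := (hc.tendsto 0).mono_left (nhdsWithin_le_nhds (s := Set.Ioi (0:ℝ)))
    simpa using h0
  · have h1 := (lim1aux a).const_mul (a/2)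
    have hval : (a/2) * a = a^2/2 := by ring
    rw [hval] at h1
    refine h1.congr' ?_
    filter_upwards [self_mem_nhdsWithin] with x hx
    have hx' : (x:ℝ) ≠ 0 := ne_of_gt hx
    field_simp

open Real Filter in
/-- The parameters (12)-(13) of the exact scheme for three pairwise
distinct eigenvalues satisfy `ψ(h) → 1`, `φ(h)/h → 1`, `θ(h) → 1/2` as `h → 0⁺`. -/
theorem limits_params_three_distinct
    (l1 l2 l3 : ℝ) (h12 : l1 ≠ l2) (h13 : l1 ≠ l3) (h23 : l2 ≠ l3) :
    Tendsto (fun h : ℝ =>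
        let e1 := exp (l1 * h); let e2 := exp (l2 * h); let e3 := exp (l3 * h)
        let T1 := l1 * (e2 - e3) + l2 * (e3 - e1) + l3 * (e1 - e2)
        let T2 := l1 * (1 - e1) * (e2 - e3) + l2 * (1 - e2) * (e3 - e1)
          + l3 * (1 - e3) * (e1 - e2)
        let θ := T1 / T2
        let C1 := l2 - l1 + l1 * e1 - l2 * e2
        let φ := (e1 - e2) / (l1 - l2 + θ * C1)
        e3 - φ * l3 * (e3 * θ + 1 - θ))
      (nhdsWithin 0 (Set.Ioi 0)) (nhds 1) ∧
    Tendsto (fun h : ℝ =>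
        let e1 := exp (l1 * h); let e2 := exp (l2 * h); let e3 := exp (l3 * h)
        let T1 := l1 * (e2 - e3) + l2 * (e3 - e1) + l3 * (e1 - e2)
        let T2 := l1 * (1 - e1) * (e2 - e3) + l2 * (1 - e2) * (e3 - e1)
          + l3 * (1 - e3) * (e1 - e2)
        let θ := T1 / T2
        let C1 := l2 - l1 + l1 * e1 - l2 * e2
        let φ := (e1 - e2) / (l1 - l2 + θ * C1)
        φ / h)
      (nhdsWithin 0 (Set.Ioi 0)) (nhds 1) ∧
    Tendsto (fun h : ℝ =>
        let e1 := exp (l1 * h); let e2 := exp (l2 * h); let e3 := exp (l3 * h)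
        let T1 := l1 * (e2 - e3) + l2 * (e3 - e1) + l3 * (e1 - e2)
        let T2 := l1 * (1 - e1) * (e2 - e3) + l2 * (1 - e2) * (e3 - e1)
          + l3 * (1 - e3) * (e1 - e2)
        T1 / T2)
      (nhdsWithin 0 (Set.Ioi 0)) (nhds (1 / 2)) := by
  have hV : ((l1-l2)*(l2-l3)*(l3-l1)) ≠ 0 :=
    mul_ne_zero (mul_ne_zero (sub_ne_zero.2 h12) (sub_ne_zero.2 h23))
      (sub_ne_zero.2 h13.symm)
  -- limit of T1/h^2
  have hT1 : Tendsto (fun h : ℝ =>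
      (l1 * (exp (l2*h) - exp (l3*h)) + l2 * (exp (l3*h) - exp (l1*h))
        + l3 * (exp (l1*h) - exp (l2*h))) / h^2)
      (nhdsWithin 0 (Set.Ioi 0)) (nhds (((l1-l2)*(l2-l3)*(l3-l1))/2)) := by
    have h0 := (((lim2aux l1).const_mul (l3-l2)).add ((lim2aux l2).const_mul (l1-l3))).add
      ((lim2aux l3).const_mul (l2-l1))
    have hval : (l3-l2)*(l1^2/2) + (l1-l3)*(l2^2/2) + (l2-l1)*(l3^2/2)
        = ((l1-l2)*(l2-l3)*(l3-l1))/2 := by ring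
    rw [hval] at h0
    exact h0.congr fun h => by ring
  -- limit of T2/h^2
  have hT2 : Tendsto (fun h : ℝ =>
      (l1 * (1 - exp (l1*h)) * (exp (l2*h) - exp (l3*h))
        + l2 * (1 - exp (l2*h)) * (exp (l3*h) - exp (l1*h))
        + l3 * (1 - exp (l3*h)) * (exp (l1*h) - exp (l2*h))) / h^2)
      (nhdsWithin 0 (Set.Ioi 0)) (nhds ((l1-l2)*(l2-l3)*(l3-l1))) := by
    have hc := (((lim2aux l1).const_mul (l3-l2)).add ((lim2aux l2).const_mul (l1-l3))).add
      ((lim2aux l3).const_mul (l2-l1))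
    have hd := (((lim2aux (l1+l2)).const_mul (l1-l2)).add
      ((lim2aux (l2+l3)).const_mul (l2-l3))).add ((lim2aux (l3+l1)).const_mul (l3-l1))
    have h0 := hc.sub hd
    have hval : ((l3-l2)*(l1^2/2) + (l1-l3)*(l2^2/2) + (l2-l1)*(l3^2/2))
        - ((l1-l2)*((l1+l2)^2/2) + (l2-l3)*((l2+l3)^2/2) + (l3-l1)*((l3+l1)^2/2))
        = (l1-l2)*(l2-l3)*(l3-l1) := by ring
    rw [hval] at h0
    refine h0.congr fun h => ?_
    rw [show (l1+l2)*h = l1*h + l2*h from by ring, show (l2+l3)*h = l2*h + l3*h from by ring,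
      show (l3+l1)*h = l3*h + l1*h from by ring, Real.exp_add, Real.exp_add, Real.exp_add]
    ring
  -- θ → 1/2
  have hθ : Tendsto (fun h : ℝ =>
      (l1 * (exp (l2*h) - exp (l3*h)) + l2 * (exp (l3*h) - exp (l1*h))
        + l3 * (exp (l1*h) - exp (l2*h))) /
      (l1 * (1 - exp (l1*h)) * (exp (l2*h) - exp (l3*h))
        + l2 * (1 - exp (l2*h)) * (exp (l3*h) - exp (l1*h))
        + l3 * (1 - exp (l3*h)) * (exp (l1*h) - exp (l2*h))))
      (nhdsWithin 0 (Set.Ioi 0)) (nhds (1/2)) := by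
    have h0 := hT1.div hT2 hV
    have hval : (((l1-l2)*(l2-l3)*(l3-l1))/2) / ((l1-l2)*(l2-l3)*(l3-l1)) = 1/2 := by
      field_simp
    rw [hval] at h0
    refine h0.congr' ?_
    filter_upwards [self_mem_nhdsWithin] with h hh
    have hh2 : (h:ℝ)^2 ≠ 0 := pow_ne_zero 2 (ne_of_gt hh)
    rcases eq_or_ne (l1 * (1 - exp (l1*h)) * (exp (l2*h) - exp (l3*h))
        + l2 * (1 - exp (l2*h)) * (exp (l3*h) - exp (l1*h))
        + l3 * (1 - exp (l3*h)) * (exp (l1*h) - exp (l2*h))) 0 with h0' | h0'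
    · simp [h0']
    · rw [Pi.div_apply, div_div_div_cancel_right₀ hh2]
  -- C1 → 0
  have hC1 : Tendsto (fun h : ℝ => l2 - l1 + l1 * exp (l1*h) - l2 * exp (l2*h))
      (nhdsWithin 0 (Set.Ioi 0)) (nhds 0) := by
    have hc : Continuous (fun h : ℝ => l2 - l1 + l1 * exp (l1*h) - l2 * exp (l2*h)) := by
      continuity
    have h0 := (hc.tendsto 0).mono_left (nhdsWithin_le_nhds (s := Set.Ioi (0:ℝ)))
    have : l2 - l1 + l1 * exp (l1*0) - l2 * exp (l2*0) = 0 := by simp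
    rwa [this] at h0
  -- denominator of φ → l1 - l2
  have hden : Tendsto (fun h : ℝ =>
      l1 - l2 + ((l1 * (exp (l2*h) - exp (l3*h)) + l2 * (exp (l3*h) - exp (l1*h))
        + l3 * (exp (l1*h) - exp (l2*h))) /
      (l1 * (1 - exp (l1*h)) * (exp (l2*h) - exp (l3*h))
        + l2 * (1 - exp (l2*h)) * (exp (l3*h) - exp (l1*h))
        + l3 * (1 - exp (l3*h)) * (exp (l1*h) - exp (l2*h))))
        * (l2 - l1 + l1 * exp (l1*h) - l2 * exp (l2*h)))
      (nhdsWithin 0 (Set.Ioi 0)) (nhds (l1 - l2)) := by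
    have h0 := (tendsto_const_nhds (x := l1 - l2)
      (f := nhdsWithin (0:ℝ) (Set.Ioi 0))).add (hθ.mul hC1)
    have : l1 - l2 + (1/2) * 0 = l1 - l2 := by ring
    rwa [this] at h0
  -- (e1 - e2)/h → l1 - l2
  have hE : Tendsto (fun h : ℝ => (exp (l1*h) - exp (l2*h))/h)
      (nhdsWithin 0 (Set.Ioi 0)) (nhds (l1 - l2)) := by
    have h0 := (lim1aux l1).sub (lim1aux l2)
    exact h0.congr fun h => by ring
  -- φ/h → 1
  have hφh : Tendsto (fun h : ℝ =>
      (exp (l1*h) - exp (l2*h)) /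
      (l1 - l2 + ((l1 * (exp (l2*h) - exp (l3*h)) + l2 * (exp (l3*h) - exp (l1*h))
        + l3 * (exp (l1*h) - exp (l2*h))) /
      (l1 * (1 - exp (l1*h)) * (exp (l2*h) - exp (l3*h))
        + l2 * (1 - exp (l2*h)) * (exp (l3*h) - exp (l1*h))
        + l3 * (1 - exp (l3*h)) * (exp (l1*h) - exp (l2*h))))
        * (l2 - l1 + l1 * exp (l1*h) - l2 * exp (l2*h))) / h)
      (nhdsWithin 0 (Set.Ioi 0)) (nhds 1) := by
    have h0 := hE.div hden (sub_ne_zero.2 h12)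
    have hval : (l1 - l2) / (l1 - l2) = 1 := div_self (sub_ne_zero.2 h12)
    rw [hval] at h0
    exact h0.congr fun h => (div_right_comm _ _ _)
  -- φ → 0
  have hφ : Tendsto (fun h : ℝ =>
      (exp (l1*h) - exp (l2*h)) /
      (l1 - l2 + ((l1 * (exp (l2*h) - exp (l3*h)) + l2 * (exp (l3*h) - exp (l1*h))
        + l3 * (exp (l1*h) - exp (l2*h))) /
      (l1 * (1 - exp (l1*h)) * (exp (l2*h) - exp (l3*h))
        + l2 * (1 - exp (l2*h)) * (exp (l3*h) - exp (l1*h))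
        + l3 * (1 - exp (l3*h)) * (exp (l1*h) - exp (l2*h))))
        * (l2 - l1 + l1 * exp (l1*h) - l2 * exp (l2*h))))
      (nhdsWithin 0 (Set.Ioi 0)) (nhds 0) := by
    have hid : Tendsto (fun h : ℝ => h) (nhdsWithin 0 (Set.Ioi 0)) (nhds 0) :=
      tendsto_id.mono_left (nhdsWithin_le_nhds (s := Set.Ioi (0:ℝ)))
    have h0 := hφh.mul hid
    rw [show (1:ℝ) * 0 = 0 from by ring] at h0
    refine h0.congr' ?_
    filter_upwards [self_mem_nhdsWithin] with h hh
    exact div_mul_cancel₀ _ (ne_of_gt hh)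
  -- e3 → 1
  have hE3 : Tendsto (fun h : ℝ => exp (l3*h)) (nhdsWithin 0 (Set.Ioi 0)) (nhds 1) := by
    have hc : Continuous (fun h : ℝ => exp (l3*h)) := by continuity
    have h0 := (hc.tendsto 0).mono_left (nhdsWithin_le_nhds (s := Set.Ioi (0:ℝ)))
    simpa using h0
  -- ψ → 1
  have hψ : Tendsto (fun h : ℝ =>
      exp (l3*h) - ((exp (l1*h) - exp (l2*h)) /
      (l1 - l2 + ((l1 * (exp (l2*h) - exp (l3*h)) + l2 * (exp (l3*h) - exp (l1*h))
        + l3 * (exp (l1*h) - exp (l2*h))) /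
      (l1 * (1 - exp (l1*h)) * (exp (l2*h) - exp (l3*h))
        + l2 * (1 - exp (l2*h)) * (exp (l3*h) - exp (l1*h))
        + l3 * (1 - exp (l3*h)) * (exp (l1*h) - exp (l2*h))))
        * (l2 - l1 + l1 * exp (l1*h) - l2 * exp (l2*h)))) * l3 *
      (exp (l3*h) * ((l1 * (exp (l2*h) - exp (l3*h)) + l2 * (exp (l3*h) - exp (l1*h))
        + l3 * (exp (l1*h) - exp (l2*h))) /
      (l1 * (1 - exp (l1*h)) * (exp (l2*h) - exp (l3*h))
        + l2 * (1 - exp (l2*h)) * (exp (l3*h) - exp (l1*h))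
        + l3 * (1 - exp (l3*h)) * (exp (l1*h) - exp (l2*h)))) + 1
        - (l1 * (exp (l2*h) - exp (l3*h)) + l2 * (exp (l3*h) - exp (l1*h))
        + l3 * (exp (l1*h) - exp (l2*h))) /
      (l1 * (1 - exp (l1*h)) * (exp (l2*h) - exp (l3*h))
        + l2 * (1 - exp (l2*h)) * (exp (l3*h) - exp (l1*h))
        + l3 * (1 - exp (l3*h)) * (exp (l1*h) - exp (l2*h)))))
      (nhdsWithin 0 (Set.Ioi 0)) (nhds 1) := by
    have h0 := hE3.sub (((hφ.mul_const l3).mul (((hE3.mul hθ).add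
      (tendsto_const_nhds (x := (1:ℝ)))).sub hθ)))
    have : (1:ℝ) - 0 * l3 * (1 * (1/2) + 1 - 1/2) = 1 := by ring
    rwa [this] at h0
  exact ⟨hψ, hφh, hθ⟩
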